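/- Negative focal substitution: if Γ ; L ⊢ ⟨A⁻⟩ is derivable and Γ ; [A⁻] ⊢ U is derivable in the focused sequent calculus for polarized intuitionistic logic, then Γ ; L ⊢ U is derivable. -/

import Mathlib

namespace StructuralFocalization

/- Polarized propositional intuitionistic logic -/
mutual
inductive PProp : Type
  | atom : Nat → PProp
  | down : NProp → PProp
  | bot  : PProp
  | or   : PProp → PProp → PProp
  | top  : PProp
  | and  : PProp → PProp → PProp
inductive NProp : Type
  | atom : Nat → NProp
  | up   : PProp → NProp
  | imp  : PProp → NProp → NProp
  | top  : NProp
  | and  : NProp → NProp → NProp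
end

/- Hypotheses: negative propositions or suspended positives ⟨A⁺⟩ -/
inductive Hyp : Type
  | neg  : NProp → Hyp
  | susp : PProp → Hyp

/- Succedents: A⁺, A⁻, or suspended ⟨A⁻⟩ -/
inductive Succ : Type
  | pos  : PProp → Succ
  | neg  : NProp → Succ
  | susp : NProp → Succ

abbrev Ctx := List Hyp

def Succ.stable : Succ → Prop
  | .pos _ => True
  | .susp _ => True
  | .neg _ => False

def Hyp.suspNormal : Hyp → Prop
  | .susp (PProp.atom _) => True
  | .susp _ => False
  | .neg _ => True

def Ctx.suspNormal (Γ : Ctx) : Prop := ∀ h ∈ Γ, h.suspNormal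

def Succ.suspNormal : Succ → Prop
  | .susp (NProp.atom _) => True
  | .susp _ => False
  | _ => True

/- The focused sequent calculus (Figures 3 and 4 of "Structural focalization",
   with the generalized id⁺/id⁻ rules for arbitrary suspended propositions). -/
mutual
/-- Right focus: Γ ⊢ [A⁺] -/
inductive RFoc : Ctx → PProp → Prop
  | idP {Γ A} : Hyp.susp A ∈ Γ → RFoc Γ A
  | downR {Γ A} : Inv Γ [] (Succ.neg A) → RFoc Γ (PProp.down A)
  | orR1 {Γ A B} : RFoc Γ A → RFoc Γ (PProp.or A B)
  | orR2 {Γ A B} : RFoc Γ B → RFoc Γ (PProp.or A B)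
  | topR {Γ} : RFoc Γ PProp.top
  | andR {Γ A B} : RFoc Γ A → RFoc Γ B → RFoc Γ (PProp.and A B)
/-- Inversion: Γ ; Ω ⊢ U -/
inductive Inv : Ctx → List PProp → Succ → Prop
  | focR {Γ A} : RFoc Γ A → Inv Γ [] (Succ.pos A)
  | focL {Γ A U} : Hyp.neg A ∈ Γ → Succ.stable U → LFoc Γ A U → Inv Γ [] U
  | etaP {Γ p Ω U} : Inv (Hyp.susp (PProp.atom p) :: Γ) Ω U → Inv Γ (PProp.atom p :: Ω) U
  | downL {Γ A Ω U} : Inv (Hyp.neg A :: Γ) Ω U → Inv Γ (PProp.down A :: Ω) U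
  | botL {Γ Ω U} : Inv Γ (PProp.bot :: Ω) U
  | orL {Γ A B Ω U} : Inv Γ (A :: Ω) U → Inv Γ (B :: Ω) U → Inv Γ (PProp.or A B :: Ω) U
  | topPL {Γ Ω U} : Inv Γ Ω U → Inv Γ (PProp.top :: Ω) U
  | andPL {Γ A B Ω U} : Inv Γ (A :: B :: Ω) U → Inv Γ (PProp.and A B :: Ω) U
  | etaN {Γ p} : Inv Γ [] (Succ.susp (NProp.atom p)) → Inv Γ [] (Succ.neg (NProp.atom p))
  | upR {Γ A} : Inv Γ [] (Succ.pos A) → Inv Γ [] (Succ.neg (NProp.up A))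
  | impR {Γ A B} : Inv Γ [A] (Succ.neg B) → Inv Γ [] (Succ.neg (NProp.imp A B))
  | topNR {Γ} : Inv Γ [] (Succ.neg NProp.top)
  | andNR {Γ A B} : Inv Γ [] (Succ.neg A) → Inv Γ [] (Succ.neg B) →
      Inv Γ [] (Succ.neg (NProp.and A B))
/-- Left focus: Γ ; [A⁻] ⊢ U -/
inductive LFoc : Ctx → NProp → Succ → Prop
  | idN {Γ A} : LFoc Γ A (Succ.susp A)
  | upL {Γ A U} : Inv Γ [A] U → LFoc Γ (NProp.up A) U
  | impL {Γ A B U} : RFoc Γ A → LFoc Γ B U → LFoc Γ (NProp.imp A B) U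
  | andL1 {Γ A B U} : LFoc Γ A U → LFoc Γ (NProp.and A B) U
  | andL2 {Γ A B U} : LFoc Γ B U → LFoc Γ (NProp.and A B) U
end

/- Unpolarized propositions and Kleene's G3 -/
inductive UProp : Type
  | atom : Nat → UProp
  | bot  : UProp
  | or   : UProp → UProp → UProp
  | top  : UProp
  | and  : UProp → UProp → UProp
  | imp  : UProp → UProp → UProp

inductive G3 : List UProp → UProp → Prop
  | init {Γ p} : UProp.atom p ∈ Γ → G3 Γ (UProp.atom p)
  | botL {Γ Q} : UProp.bot ∈ Γ → G3 Γ Q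
  | orR1 {Γ A B} : G3 Γ A → G3 Γ (UProp.or A B)
  | orR2 {Γ A B} : G3 Γ B → G3 Γ (UProp.or A B)
  | orL {Γ A B Q} : UProp.or A B ∈ Γ → G3 (A :: Γ) Q → G3 (B :: Γ) Q → G3 Γ Q
  | topR {Γ} : G3 Γ UProp.top
  | andR {Γ A B} : G3 Γ A → G3 Γ B → G3 Γ (UProp.and A B)
  | andL1 {Γ A B Q} : UProp.and A B ∈ Γ → G3 (A :: Γ) Q → G3 Γ Q
  | andL2 {Γ A B Q} : UProp.and A B ∈ Γ → G3 (B :: Γ) Q → G3 Γ Q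
  | impR {Γ A B} : G3 (A :: Γ) B → G3 Γ (UProp.imp A B)
  | impL {Γ A B Q} : UProp.imp A B ∈ Γ → G3 Γ A → G3 (B :: Γ) Q → G3 Γ Q

/-- G3 with an ordered auxiliary context Ψ: Γ; Ψ ⊢ Q -/
inductive G3Psi : List UProp → List UProp → UProp → Prop
  | cons {Γ P Ψ Q} : G3Psi (P :: Γ) Ψ Q → G3Psi Γ (P :: Ψ) Q
  | nil {Γ Q} : G3 Γ Q → G3Psi Γ [] Q

/- Erasure -/
mutual
def eraseP : PProp → UProp
  | .atom p => .atom p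
  | .down A => eraseN A
  | .bot => .bot
  | .or A B => .or (eraseP A) (eraseP B)
  | .top => .top
  | .and A B => .and (eraseP A) (eraseP B)
def eraseN : NProp → UProp
  | .atom p => .atom p
  | .up A => eraseP A
  | .imp A B => .imp (eraseP A) (eraseN B)
  | .top => .top
  | .and A B => .and (eraseN A) (eraseN B)
end

def eraseHyp : Hyp → UProp
  | .neg A => eraseN A
  | .susp A => eraseP A

def eraseCtx (Γ : Ctx) : List UProp := Γ.map eraseHyp

def eraseSucc : Succ → UProp
  | .pos A => eraseP A
  | .neg A => eraseN A
  | .susp A => eraseN A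

def Sub (Γ Γ' : Ctx) : Prop := ∀ x ∈ Γ, x ∈ Γ'

theorem Sub.cons {x : Hyp} {Γ Γ'} (h : Sub Γ Γ') : Sub (x :: Γ) (x :: Γ') := by
  intro y hy
  rcases List.mem_cons.mp hy with h' | h'
  · exact h' ▸ List.mem_cons_self
  · exact List.mem_cons_of_mem _ (h _ h')

theorem monoInv {Γ Ω S} (h : Inv Γ Ω S) : ∀ Γ', Sub Γ Γ' → Inv Γ' Ω S := by
  refine Inv.rec (motive_1 := fun Γ A _ => ∀ Γ', Sub Γ Γ' → RFoc Γ' A)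
    (motive_2 := fun Γ Ω S _ => ∀ Γ', Sub Γ Γ' → Inv Γ' Ω S)
    (motive_3 := fun Γ A S _ => ∀ Γ', Sub Γ Γ' → LFoc Γ' A S)
    ?_ ?_ ?_ ?_ ?_ ?_ ?_ ?_ ?_ ?_ ?_ ?_ ?_ ?_ ?_ ?_ ?_ ?_ ?_ ?_ ?_ ?_ ?_ ?_ h
  · intro Γ A mem Γ' hs; exact RFoc.idP (hs _ mem)
  · intro Γ A d ih Γ' hs; exact RFoc.downR (ih _ hs)
  · intro Γ A B d ih Γ' hs; exact RFoc.orR1 (ih _ hs)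
  · intro Γ A B d ih Γ' hs; exact RFoc.orR2 (ih _ hs)
  · intro Γ Γ' hs; exact RFoc.topR
  · intro Γ A B d1 d2 ih1 ih2 Γ' hs; exact RFoc.andR (ih1 _ hs) (ih2 _ hs)
  · intro Γ A d ih Γ' hs; exact Inv.focR (ih _ hs)
  · intro Γ A U mem st d ih Γ' hs; exact Inv.focL (hs _ mem) st (ih _ hs)
  · intro Γ p Ω U d ih Γ' hs; exact Inv.etaP (ih _ (Sub.cons hs))
  · intro Γ A Ω U d ih Γ' hs; exact Inv.downL (ih _ (Sub.cons hs))
  · intro Γ Ω U Γ' hs; exact Inv.botL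
  · intro Γ A B Ω U d1 d2 ih1 ih2 Γ' hs; exact Inv.orL (ih1 _ hs) (ih2 _ hs)
  · intro Γ Ω U d ih Γ' hs; exact Inv.topPL (ih _ hs)
  · intro Γ A B Ω U d ih Γ' hs; exact Inv.andPL (ih _ hs)
  · intro Γ p d ih Γ' hs; exact Inv.etaN (ih _ hs)
  · intro Γ A d ih Γ' hs; exact Inv.upR (ih _ hs)
  · intro Γ A B d ih Γ' hs; exact Inv.impR (ih _ hs)
  · intro Γ Γ' hs; exact Inv.topNR
  · intro Γ A B d1 d2 ih1 ih2 Γ' hs; exact Inv.andNR (ih1 _ hs) (ih2 _ hs)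
  · intro Γ A Γ' hs; exact LFoc.idN
  · intro Γ A U d ih Γ' hs; exact LFoc.upL (ih _ hs)
  · intro Γ A B U r d ih1 ih2 Γ' hs; exact LFoc.impL (ih1 _ hs) (ih2 _ hs)
  · intro Γ A B U d ih Γ' hs; exact LFoc.andL1 (ih _ hs)
  · intro Γ A B U d ih Γ' hs; exact LFoc.andL2 (ih _ hs)

theorem Sub.weak {x : Hyp} {Γ Γ'} (h : Sub Γ Γ') : Sub Γ (x :: Γ') :=
  fun y hy => List.mem_cons_of_mem _ (h _ hy)

theorem monoLFoc {Γ B S} (h : LFoc Γ B S) : ∀ Γ', Sub Γ Γ' → LFoc Γ' B S := by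
  refine LFoc.rec (motive_1 := fun Γ A _ => ∀ Γ', Sub Γ Γ' → RFoc Γ' A)
    (motive_2 := fun Γ Ω S _ => ∀ Γ', Sub Γ Γ' → Inv Γ' Ω S)
    (motive_3 := fun Γ A S _ => ∀ Γ', Sub Γ Γ' → LFoc Γ' A S)
    ?_ ?_ ?_ ?_ ?_ ?_ ?_ ?_ ?_ ?_ ?_ ?_ ?_ ?_ ?_ ?_ ?_ ?_ ?_ ?_ ?_ ?_ ?_ ?_ h
  · intro Γ A mem Γ' hs; exact RFoc.idP (hs _ mem)
  · intro Γ A d ih Γ' hs; exact RFoc.downR (ih _ hs)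
  · intro Γ A B d ih Γ' hs; exact RFoc.orR1 (ih _ hs)
  · intro Γ A B d ih Γ' hs; exact RFoc.orR2 (ih _ hs)
  · intro Γ Γ' hs; exact RFoc.topR
  · intro Γ A B d1 d2 ih1 ih2 Γ' hs; exact RFoc.andR (ih1 _ hs) (ih2 _ hs)
  · intro Γ A d ih Γ' hs; exact Inv.focR (ih _ hs)
  · intro Γ A U mem st d ih Γ' hs; exact Inv.focL (hs _ mem) st (ih _ hs)
  · intro Γ p Ω U d ih Γ' hs; exact Inv.etaP (ih _ (Sub.cons hs))
  · intro Γ A Ω U d ih Γ' hs; exact Inv.downL (ih _ (Sub.cons hs))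
  · intro Γ Ω U Γ' hs; exact Inv.botL
  · intro Γ A B Ω U d1 d2 ih1 ih2 Γ' hs; exact Inv.orL (ih1 _ hs) (ih2 _ hs)
  · intro Γ Ω U d ih Γ' hs; exact Inv.topPL (ih _ hs)
  · intro Γ A B Ω U d ih Γ' hs; exact Inv.andPL (ih _ hs)
  · intro Γ p d ih Γ' hs; exact Inv.etaN (ih _ hs)
  · intro Γ A d ih Γ' hs; exact Inv.upR (ih _ hs)
  · intro Γ A B d ih Γ' hs; exact Inv.impR (ih _ hs)
  · intro Γ Γ' hs; exact Inv.topNR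
  · intro Γ A B d1 d2 ih1 ih2 Γ' hs; exact Inv.andNR (ih1 _ hs) (ih2 _ hs)
  · intro Γ A Γ' hs; exact LFoc.idN
  · intro Γ A U d ih Γ' hs; exact LFoc.upL (ih _ hs)
  · intro Γ A B U r d ih1 ih2 Γ' hs; exact LFoc.impL (ih1 _ hs) (ih2 _ hs)
  · intro Γ A B U d ih Γ' hs; exact LFoc.andL1 (ih _ hs)
  · intro Γ A B U d ih Γ' hs; exact LFoc.andL2 (ih _ hs)
/-- Patterns: one leaf of the decomposition of a positive proposition. -/
inductive Pat : PProp → Ctx → Prop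
  | atom {p} : Pat (PProp.atom p) [Hyp.susp (PProp.atom p)]
  | down {A} : Pat (PProp.down A) [Hyp.neg A]
  | or1 {A B Δ} : Pat A Δ → Pat (PProp.or A B) Δ
  | or2 {A B Δ} : Pat B Δ → Pat (PProp.or A B) Δ
  | top : Pat PProp.top []
  | and {A B Δ₁ Δ₂} : Pat A Δ₁ → Pat B Δ₂ → Pat (PProp.and A B) (Δ₁ ++ Δ₂)

theorem patSubst {A Δ} (hp : Pat A Δ) :
    ∀ {Γ Ω U}, Inv Γ (A :: Ω) U → Sub Δ Γ → Inv Γ Ω U := by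
  induction hp with
  | @atom p =>
    intro Γ Ω U h hs
    have hm : Hyp.susp (PProp.atom p) ∈ Γ := hs _ (by simp)
    cases h with
    | etaP d =>
      refine monoInv d Γ (fun x hx => ?_)
      rcases List.mem_cons.mp hx with h' | h'
      · exact h' ▸ hm
      · exact h'
  | @down A =>
    intro Γ Ω U h hs
    have hm : Hyp.neg A ∈ Γ := hs _ (by simp)
    cases h with
    | downL d =>
      refine monoInv d Γ (fun x hx => ?_)
      rcases List.mem_cons.mp hx with h' | h'
      · exact h' ▸ hm
      · exact h'
  | or1 _ ih =>
    intro Γ Ω U h hs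
    cases h with
    | orL d1 d2 => exact ih d1 hs
  | or2 _ ih =>
    intro Γ Ω U h hs
    cases h with
    | orL d1 d2 => exact ih d2 hs
  | top =>
    intro Γ Ω U h hs
    cases h with
    | topPL d => exact d
  | and _ _ ih1 ih2 =>
    intro Γ Ω U h hs
    cases h with
    | andPL d =>
      exact ih2 (ih1 d (fun x hx => hs _ (List.mem_append_left _ hx)))
        (fun x hx => hs _ (List.mem_append_right _ hx))

theorem patCover : ∀ (A : PProp) {Γ Ω U},
    (∀ Δ, Pat A Δ → Inv (Δ ++ Γ) Ω U) → Inv Γ (A :: Ω) U := by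
  intro A
  refine PProp.rec (motive_2 := fun _ => True)
    (motive_1 := fun A => ∀ {Γ Ω U}, (∀ Δ, Pat A Δ → Inv (Δ ++ Γ) Ω U) → Inv Γ (A :: Ω) U)
    ?_ ?_ ?_ ?_ ?_ ?_ ?_ ?_ ?_ ?_ ?_ A
  · intro p Γ Ω U h; exact Inv.etaP (h _ Pat.atom)
  · intro A _ Γ Ω U h; exact Inv.downL (h _ Pat.down)
  · intro Γ Ω U _; exact Inv.botL
  · intro A B ihA ihB Γ Ω U h
    exact Inv.orL (ihA fun Δ hp => h _ (Pat.or1 hp)) (ihB fun Δ hp => h _ (Pat.or2 hp))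
  · intro Γ Ω U h; exact Inv.topPL (h _ Pat.top)
  · intro A B ihA ihB Γ Ω U h
    refine Inv.andPL (ihA fun Δ₁ hp1 => ihB fun Δ₂ hp2 => ?_)
    refine monoInv (h _ (Pat.and hp1 hp2)) _ (fun x hx => ?_)
    simp only [List.mem_append] at hx ⊢
    tauto
  · intros; trivial
  · intros; trivial
  · intros; trivial
  · intros; trivial
  · intros; trivial

/-- Commuting a transformation of a negative succedent under inversion. -/
theorem commuteInv {Γ₀ : Ctx} {N U₂}
    (hP : ∀ Γ'', Sub Γ₀ Γ'' → Inv Γ'' [] (Succ.neg N) → Inv Γ'' [] U₂)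
    {Γ Ω S} (h : Inv Γ Ω S) : Sub Γ₀ Γ → S = Succ.neg N → Inv Γ Ω U₂ := by
  refine Inv.rec (motive_1 := fun _ _ _ => True)
    (motive_2 := fun Γ Ω S _ => Sub Γ₀ Γ → S = Succ.neg N → Inv Γ Ω U₂)
    (motive_3 := fun Γ B S _ => Sub Γ₀ Γ → S = Succ.neg N → LFoc Γ B U₂)
    ?_ ?_ ?_ ?_ ?_ ?_ ?_ ?_ ?_ ?_ ?_ ?_ ?_ ?_ ?_ ?_ ?_ ?_ ?_ ?_ ?_ ?_ ?_ ?_ h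
  · intro _ _ _; trivial
  · intro _ _ _ _; trivial
  · intro _ _ _ _ _; trivial
  · intro _ _ _ _ _; trivial
  · intro _; trivial
  · intro _ _ _ _ _ _ _; trivial
  · intro Γ A d ih hs eq; exact nomatch eq
  · intro Γ A U mem st d ih hs eq; subst eq; exact st.elim
  · intro Γ p Ω U d ih hs eq; exact Inv.etaP (ih (Sub.weak hs) eq)
  · intro Γ A Ω U d ih hs eq; exact Inv.downL (ih (Sub.weak hs) eq)
  · intro Γ Ω U hs eq; exact Inv.botL
  · intro Γ A B Ω U d1 d2 ih1 ih2 hs eq; exact Inv.orL (ih1 hs eq) (ih2 hs eq)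
  · intro Γ Ω U d ih hs eq; exact Inv.topPL (ih hs eq)
  · intro Γ A B Ω U d ih hs eq; exact Inv.andPL (ih hs eq)
  · intro Γ p d ih hs eq; cases eq; exact hP _ hs (Inv.etaN d)
  · intro Γ A d ih hs eq; cases eq; exact hP _ hs (Inv.upR d)
  · intro Γ A B d ih hs eq; cases eq; exact hP _ hs (Inv.impR d)
  · intro Γ hs eq; cases eq; exact hP _ hs Inv.topNR
  · intro Γ A B d1 d2 ih1 ih2 hs eq; cases eq; exact hP _ hs (Inv.andNR d1 d2)
  · intro Γ A hs eq; exact nomatch eq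
  · intro Γ A U d ih hs eq; exact LFoc.upL (ih hs eq)
  · intro Γ A B U r d _ ih hs eq; exact LFoc.impL r (ih hs eq)
  · intro Γ A B U d ih hs eq; exact LFoc.andL1 (ih hs eq)
  · intro Γ A B U d ih hs eq; exact LFoc.andL2 (ih hs eq)

theorem commuteLFoc {Γ₀ : Ctx} {N U₂}
    (hP : ∀ Γ'', Sub Γ₀ Γ'' → Inv Γ'' [] (Succ.neg N) → Inv Γ'' [] U₂)
    {Γ B S} (h : LFoc Γ B S) : Sub Γ₀ Γ → S = Succ.neg N → LFoc Γ B U₂ := by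
  refine LFoc.rec (motive_1 := fun _ _ _ => True)
    (motive_2 := fun Γ Ω S _ => Sub Γ₀ Γ → S = Succ.neg N → Inv Γ Ω U₂)
    (motive_3 := fun Γ B S _ => Sub Γ₀ Γ → S = Succ.neg N → LFoc Γ B U₂)
    ?_ ?_ ?_ ?_ ?_ ?_ ?_ ?_ ?_ ?_ ?_ ?_ ?_ ?_ ?_ ?_ ?_ ?_ ?_ ?_ ?_ ?_ ?_ ?_ h
  · intro _ _ _; trivial
  · intro _ _ _ _; trivial
  · intro _ _ _ _ _; trivial
  · intro _ _ _ _ _; trivial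
  · intro _; trivial
  · intro _ _ _ _ _ _ _; trivial
  · intro Γ A d ih hs eq; exact nomatch eq
  · intro Γ A U mem st d ih hs eq; subst eq; exact st.elim
  · intro Γ p Ω U d ih hs eq; exact Inv.etaP (ih (Sub.weak hs) eq)
  · intro Γ A Ω U d ih hs eq; exact Inv.downL (ih (Sub.weak hs) eq)
  · intro Γ Ω U hs eq; exact Inv.botL
  · intro Γ A B Ω U d1 d2 ih1 ih2 hs eq; exact Inv.orL (ih1 hs eq) (ih2 hs eq)
  · intro Γ Ω U d ih hs eq; exact Inv.topPL (ih hs eq)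
  · intro Γ A B Ω U d ih hs eq; exact Inv.andPL (ih hs eq)
  · intro Γ p d ih hs eq; cases eq; exact hP _ hs (Inv.etaN d)
  · intro Γ A d ih hs eq; cases eq; exact hP _ hs (Inv.upR d)
  · intro Γ A B d ih hs eq; cases eq; exact hP _ hs (Inv.impR d)
  · intro Γ hs eq; cases eq; exact hP _ hs Inv.topNR
  · intro Γ A B d1 d2 ih1 ih2 hs eq; cases eq; exact hP _ hs (Inv.andNR d1 d2)
  · intro Γ A hs eq; exact nomatch eq
  · intro Γ A U d ih hs eq; exact LFoc.upL (ih hs eq)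
  · intro Γ A B U r d _ ih hs eq; exact LFoc.impL r (ih hs eq)
  · intro Γ A B U d ih hs eq; exact LFoc.andL1 (ih hs eq)
  · intro Γ A B U d ih hs eq; exact LFoc.andL2 (ih hs eq)

/-- From a left focus on a hypothesis with a negative succedent, recover inversion. -/
theorem negLFocInv : ∀ (N : NProp) {Γ D}, Hyp.neg D ∈ Γ →
    LFoc Γ D (Succ.neg N) → Inv Γ [] (Succ.neg N) := by
  refine NProp.rec (motive_1 := fun _ => True)
    (motive_2 := fun N => ∀ {Γ D}, Hyp.neg D ∈ Γ →
      LFoc Γ D (Succ.neg N) → Inv Γ [] (Succ.neg N))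
    ?_ ?_ ?_ ?_ ?_ ?_ ?_ ?_ ?_ ?_ ?_
  · intro _; trivial
  · intro _ _; trivial
  · trivial
  · intro _ _ _ _; trivial
  · trivial
  · intro _ _ _ _; trivial
  · -- atom
    intro p Γ D mem h
    refine Inv.etaN (Inv.focL mem trivial (commuteLFoc ?_ h (fun _ hx => hx) rfl))
    intro Γ'' _ d
    cases d with
    | focL mem' st d' => exact st.elim
    | etaN d' => exact d'
  · -- up
    intro A _ Γ D mem h
    refine Inv.upR (Inv.focL mem trivial (commuteLFoc ?_ h (fun _ hx => hx) rfl))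
    intro Γ'' _ d
    cases d with
    | focL mem' st d' => exact st.elim
    | upR d' => exact d'
  · -- imp
    intro A B _ ihB Γ D mem h
    refine Inv.impR (patCover A fun Δ hp => ?_)
    refine ihB (List.mem_append_right _ mem)
      (commuteLFoc ?_ (monoLFoc h _ (fun x hx => List.mem_append_right _ hx))
        (fun _ hx => hx) rfl)
    intro Γ'' hs d
    cases d with
    | focL mem' st d' => exact st.elim
    | impR d' => exact patSubst hp d' (fun x hx => hs _ (List.mem_append_left _ hx))
  · -- top
    intro Γ D _ _; exact Inv.topNR
  · -- and
    intro A B ihA ihB Γ D mem h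
    refine Inv.andNR (ihA mem (commuteLFoc ?_ h (fun _ hx => hx) rfl))
      (ihB mem (commuteLFoc ?_ h (fun _ hx => hx) rfl))
    · intro Γ'' _ d
      cases d with
      | focL mem' st d' => exact st.elim
      | andNR d1 d2 => exact d1
    · intro Γ'' _ d
      cases d with
      | focL mem' st d' => exact st.elim
      | andNR d1 d2 => exact d2

/-- Generalized focL: no stability requirement on the succedent. -/
theorem focL' {Γ D U} (mem : Hyp.neg D ∈ Γ) (h : LFoc Γ D U) : Inv Γ [] U := by
  cases U with
  | pos A => exact Inv.focL mem trivial h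
  | susp A => exact Inv.focL mem trivial h
  | neg N => exact negLFocInv N mem h

theorem mainInv {Γ₀ : Ctx} {A₀ U₀} (hA : LFoc Γ₀ A₀ U₀)
    {Γ Ω S} (h : Inv Γ Ω S) : Sub Γ₀ Γ → S = Succ.susp A₀ → Inv Γ Ω U₀ := by
  refine Inv.rec (motive_1 := fun _ _ _ => True)
    (motive_2 := fun Γ Ω S _ => Sub Γ₀ Γ → S = Succ.susp A₀ → Inv Γ Ω U₀)
    (motive_3 := fun Γ B S _ => Sub Γ₀ Γ → S = Succ.susp A₀ → LFoc Γ B U₀)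
    ?_ ?_ ?_ ?_ ?_ ?_ ?_ ?_ ?_ ?_ ?_ ?_ ?_ ?_ ?_ ?_ ?_ ?_ ?_ ?_ ?_ ?_ ?_ ?_ h
  · intro _ _ _; trivial
  · intro _ _ _ _; trivial
  · intro _ _ _ _ _; trivial
  · intro _ _ _ _ _; trivial
  · intro _; trivial
  · intro _ _ _ _ _ _ _; trivial
  · intro Γ A d ih hs eq; exact nomatch eq
  · intro Γ A U mem st d ih hs eq; exact focL' mem (ih hs eq)
  · intro Γ p Ω U d ih hs eq; exact Inv.etaP (ih (Sub.weak hs) eq)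
  · intro Γ A Ω U d ih hs eq; exact Inv.downL (ih (Sub.weak hs) eq)
  · intro Γ Ω U hs eq; exact Inv.botL
  · intro Γ A B Ω U d1 d2 ih1 ih2 hs eq; exact Inv.orL (ih1 hs eq) (ih2 hs eq)
  · intro Γ Ω U d ih hs eq; exact Inv.topPL (ih hs eq)
  · intro Γ A B Ω U d ih hs eq; exact Inv.andPL (ih hs eq)
  · intro Γ p d ih hs eq; exact nomatch eq
  · intro Γ A d ih hs eq; exact nomatch eq
  · intro Γ A B d ih hs eq; exact nomatch eq
  · intro Γ hs eq; exact nomatch eq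
  · intro Γ A B d1 d2 ih1 ih2 hs eq; exact nomatch eq
  · intro Γ A hs eq; cases eq; exact monoLFoc hA _ hs
  · intro Γ A U d ih hs eq; exact LFoc.upL (ih hs eq)
  · intro Γ A B U r d _ ih hs eq; exact LFoc.impL r (ih hs eq)
  · intro Γ A B U d ih hs eq; exact LFoc.andL1 (ih hs eq)
  · intro Γ A B U d ih hs eq; exact LFoc.andL2 (ih hs eq)

theorem mainLFoc {Γ₀ : Ctx} {A₀ U₀} (hA : LFoc Γ₀ A₀ U₀)
    {Γ B S} (h : LFoc Γ B S) : Sub Γ₀ Γ → S = Succ.susp A₀ → LFoc Γ B U₀ := by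
  refine LFoc.rec (motive_1 := fun _ _ _ => True)
    (motive_2 := fun Γ Ω S _ => Sub Γ₀ Γ → S = Succ.susp A₀ → Inv Γ Ω U₀)
    (motive_3 := fun Γ B S _ => Sub Γ₀ Γ → S = Succ.susp A₀ → LFoc Γ B U₀)
    ?_ ?_ ?_ ?_ ?_ ?_ ?_ ?_ ?_ ?_ ?_ ?_ ?_ ?_ ?_ ?_ ?_ ?_ ?_ ?_ ?_ ?_ ?_ ?_ h
  · intro _ _ _; trivial
  · intro _ _ _ _; trivial
  · intro _ _ _ _ _; trivial
  · intro _ _ _ _ _; trivial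
  · intro _; trivial
  · intro _ _ _ _ _ _ _; trivial
  · intro Γ A d ih hs eq; exact nomatch eq
  · intro Γ A U mem st d ih hs eq; exact focL' mem (ih hs eq)
  · intro Γ p Ω U d ih hs eq; exact Inv.etaP (ih (Sub.weak hs) eq)
  · intro Γ A Ω U d ih hs eq; exact Inv.downL (ih (Sub.weak hs) eq)
  · intro Γ Ω U hs eq; exact Inv.botL
  · intro Γ A B Ω U d1 d2 ih1 ih2 hs eq; exact Inv.orL (ih1 hs eq) (ih2 hs eq)
  · intro Γ Ω U d ih hs eq; exact Inv.topPL (ih hs eq)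
  · intro Γ A B Ω U d ih hs eq; exact Inv.andPL (ih hs eq)
  · intro Γ p d ih hs eq; exact nomatch eq
  · intro Γ A d ih hs eq; exact nomatch eq
  · intro Γ A B d ih hs eq; exact nomatch eq
  · intro Γ hs eq; exact nomatch eq
  · intro Γ A B d1 d2 ih1 ih2 hs eq; exact nomatch eq
  · intro Γ A hs eq; cases eq; exact monoLFoc hA _ hs
  · intro Γ A U d ih hs eq; exact LFoc.upL (ih hs eq)
  · intro Γ A B U r d _ ih hs eq; exact LFoc.impL r (ih hs eq)
  · intro Γ A B U d ih hs eq; exact LFoc.andL1 (ih hs eq)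
  · intro Γ A B U d ih hs eq; exact LFoc.andL2 (ih hs eq)
/-- Negative focal substitution (L ranges over inversion contexts Ω
    and left-focused propositions [B⁻]). -/
theorem negative_focal_substitution {Γ : Ctx} {A : NProp} {U : Succ}
    (h : LFoc Γ A U) :
    (∀ Ω, Inv Γ Ω (Succ.susp A) → Inv Γ Ω U) ∧
    (∀ B, LFoc Γ B (Succ.susp A) → LFoc Γ B U) := by
  exact ⟨fun _ d => mainInv h d (fun _ hx => hx) rfl,
         fun _ d => mainLFoc h d (fun _ hx => hx) rfl⟩

end StructuralFocalization
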